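/- Let y be an odd positive integer and let d ≥ 1. Then for all (x,z) ∈ ℕ×ℕ, writing x' = ⌊x/2^d⌋, z' = ⌊z/2^d⌋, x'' = x mod 2^d, z'' = z mod 2^d, one has culam[2^d·y+1](x,z) = min(2, culam[y−1](x',z')·O1[d](x'',z'') + culam[y](x',z')·O2[d](x'',z'')). -/
import Mathlib


/-- Fuel-indexed Ulam predicate: a binary word (as a `List Bool`) of length 1 is Ulam,
and a longer word is Ulam iff it is expressible *uniquely* as a concatenation of two
distinct (nonempty) Ulam words. The fuel strictly exceeds the lengths needed. -/
def ulamAux : ℕ → List Bool → Prop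
  | 0, _ => False
  | n + 1, w =>
    if w.length = 1 then True
    else ∃! p : List Bool × List Bool,
      p.1 ≠ [] ∧ p.2 ≠ [] ∧ p.1 ≠ p.2 ∧ w = p.1 ++ p.2 ∧
        ulamAux n p.1 ∧ ulamAux n p.2

/-- A binary word is an Ulam word. -/
def IsUlam (w : List Bool) : Prop := ulamAux w.length w

/-- The word `0^x 1 0^y`. -/
def wordTwo (x y : ℕ) : List Bool :=
  List.replicate x false ++ [true] ++ List.replicate y false

/-- The word `0^x 1 0^y 1 0^z`. -/
def wordThree (x y z : ℕ) : List Bool :=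
  List.replicate x false ++ [true] ++ List.replicate y false ++ [true] ++
    List.replicate z false

/-- `UlamSet y` is the set of pairs `(x,z)` such that `0^x 1 0^y 1 0^z` is Ulam. -/
def UlamSet (y : ℕ) : Set (ℕ × ℕ) := {p | IsUlam (wordThree p.1 y p.2)}

/-- `culam y x z = min(2, N)` where `N` counts `0 ≤ a ≤ y` with both
`w(x,a)` and `w(y-a,z)` Ulam. -/
noncomputable def culam (y x z : ℕ) : ℕ :=
  min 2 {a : ℕ | a ≤ y ∧ IsUlam (wordTwo x a) ∧ IsUlam (wordTwo (y - a) z)}.ncard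

/-- A positive integer is Zumkeller if its binary representation has at most one `0`. -/
def IsZumkeller (y : ℕ) : Prop := 0 < y ∧ (Nat.bits y).count false ≤ 1

/-- The largest `e ≤ d - 1` with `x mod 2^(e+1) < 2^e` and `z mod 2^(e+1) < 2^e`
(and `0` if none exists). -/
def eIdx (d x z : ℕ) : ℕ :=
  Nat.findGreatest (fun e => x % 2 ^ (e + 1) < 2 ^ e ∧ z % 2 ^ (e + 1) < 2 ^ e) (d - 1)

/-- The universal pattern `E1[d]` on `B_d`. -/
def E1 (d x z : ℕ) : ℕ :=
  if 2 ^ d - 1 ≤ x + z then 0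
  else if x % 2 ^ eIdx d x z + z % 2 ^ eIdx d x z < 2 ^ eIdx d x z - 1 then 2 else 1

/-- The universal pattern `E2[d]` on `B_d` (constant `1`). -/
def E2 (_d _x _z : ℕ) : ℕ := 1

/-- The universal pattern `O1[d]` on `B_d`. -/
def O1 (d x z : ℕ) : ℕ :=
  if 2 ^ d - 2 ≤ x + z then 0
  else if (x + z) % 2 = 0 then (if x % 2 = 1 then 0 else 2)
  else if x % 2 ^ eIdx d x z + z % 2 ^ eIdx d x z < 2 ^ eIdx d x z - 1 then 2 else 1

/-- The universal pattern `O2[d]` on `B_d` (independent of `d`). -/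
def O2 (_d x z : ℕ) : ℕ :=
  if (x + z) % 2 = 0 then (if x % 2 = 1 then 0 else 2) else 1
namespace UlamThm

lemma ulamAux_mono : ∀ n (w : List Bool), w ≠ [] → w.length ≤ n → (ulamAux n w ↔ ulamAux (n+1) w) := by
  intro n
  induction n with
  | zero =>
    intro w hw hl
    cases w with
    | nil => exact absurd rfl hw
    | cons b t => simp at hl
  | succ n ih =>
    intro w hw hl
    show ulamAux (n+1) w ↔ ulamAux (n+1+1) w
    simp only [ulamAux]
    by_cases h1 : w.length = 1
    · simp [h1]
    · simp only [h1, if_false]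
      apply existsUnique_congr
      intro p
      have hlen : ∀ (q r : List Bool), w = q ++ r → r ≠ [] → q.length ≤ n := by
        intro q r hqr hr
        have h2 := congrArg List.length hqr
        simp only [List.length_append] at h2
        have h3 : 0 < r.length := List.length_pos_iff.mpr hr
        omega
      constructor
      · rintro ⟨hp1, hp2, hp3, hp4, hp5, hp6⟩
        have l1 : p.1.length ≤ n := hlen p.1 p.2 hp4 hp2
        have l2 : p.2.length ≤ n := by
          have h2 := congrArg List.length hp4
          simp only [List.length_append] at h2
          have h3 : 0 < p.1.length := List.length_pos_iff.mpr hp1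
          omega
        exact ⟨hp1, hp2, hp3, hp4, (ih p.1 hp1 l1).mp hp5, (ih p.2 hp2 l2).mp hp6⟩
      · rintro ⟨hp1, hp2, hp3, hp4, hp5, hp6⟩
        have l1 : p.1.length ≤ n := hlen p.1 p.2 hp4 hp2
        have l2 : p.2.length ≤ n := by
          have h2 := congrArg List.length hp4
          simp only [List.length_append] at h2
          have h3 : 0 < p.1.length := List.length_pos_iff.mpr hp1
          omega
        exact ⟨hp1, hp2, hp3, hp4, (ih p.1 hp1 l1).mpr hp5, (ih p.2 hp2 l2).mpr hp6⟩

lemma ulamAux_eq (n : ℕ) (w : List Bool) (hw : w ≠ []) (hl : w.length ≤ n) :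
    ulamAux n w ↔ IsUlam w := by
  unfold IsUlam
  induction n with
  | zero =>
    have : 0 < w.length := List.length_pos_iff.mpr hw
    omega
  | succ n ih =>
    rcases Nat.lt_or_ge w.length (n+1) with h | h
    · rw [← ih (by omega), ulamAux_mono n w hw (by omega)]
    · have h2 : w.length = n+1 := by omega
      rw [h2]

lemma isUlam_cons {w : List Bool} (h2 : 2 ≤ w.length) :
    IsUlam w ↔ ∃! p : List Bool × List Bool,
      p.1 ≠ [] ∧ p.2 ≠ [] ∧ p.1 ≠ p.2 ∧ w = p.1 ++ p.2 ∧ IsUlam p.1 ∧ IsUlam p.2 := by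
  obtain ⟨m, hm⟩ : ∃ m, w.length = m + 1 := ⟨w.length - 1, by omega⟩
  unfold IsUlam
  rw [hm]
  simp only [ulamAux]
  rw [if_neg (by omega)]
  apply existsUnique_congr
  intro p
  constructor
  · rintro ⟨hp1, hp2, hp3, hp4, hp5, hp6⟩
    have h3 := congrArg List.length hp4
    simp only [List.length_append] at h3
    have h4 : 0 < p.1.length := List.length_pos_iff.mpr hp1
    have h5 : 0 < p.2.length := List.length_pos_iff.mpr hp2
    exact ⟨hp1, hp2, hp3, hp4, (ulamAux_eq m p.1 hp1 (by omega)).mp hp5,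
      (ulamAux_eq m p.2 hp2 (by omega)).mp hp6⟩
  · rintro ⟨hp1, hp2, hp3, hp4, hp5, hp6⟩
    have h3 := congrArg List.length hp4
    simp only [List.length_append] at h3
    have h4 : 0 < p.1.length := List.length_pos_iff.mpr hp1
    have h5 : 0 < p.2.length := List.length_pos_iff.mpr hp2
    exact ⟨hp1, hp2, hp3, hp4, (ulamAux_eq m p.1 hp1 (by omega)).mpr hp5,
      (ulamAux_eq m p.2 hp2 (by omega)).mpr hp6⟩

lemma isUlam_single (b : Bool) : IsUlam [b] := by
  unfold IsUlam
  simp [ulamAux]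

lemma not_isUlam_replicate : ∀ k, 2 ≤ k → ¬ IsUlam (List.replicate k false) := by
  intro k
  induction k using Nat.strong_induction_on with
  | _ k ih =>
    intro hk hU
    rw [isUlam_cons (by simp; omega)] at hU
    obtain ⟨p, ⟨hp1, hp2, hp3, hp4, hp5, hp6⟩, _⟩ := hU
    have e1 : p.1 = List.replicate p.1.length false := by
      apply List.eq_replicate_of_mem
      intro b hb
      exact List.eq_of_mem_replicate (hp4 ▸ List.mem_append_left p.2 hb)
    have e2 : p.2 = List.replicate p.2.length false := by
      apply List.eq_replicate_of_mem
      intro b hb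
      exact List.eq_of_mem_replicate (hp4 ▸ List.mem_append_right p.1 hb)
    have hlen : p.1.length + p.2.length = k := by
      have h2 := congrArg List.length hp4
      simpa using h2.symm
    have h4 : 0 < p.1.length := List.length_pos_iff.mpr hp1
    have h5 : 0 < p.2.length := List.length_pos_iff.mpr hp2
    have ha : p.1.length = 1 := by
      by_contra hne
      exact ih p.1.length (by omega) (by omega) (e1 ▸ hp5)
    have hb : p.2.length = 1 := by
      by_contra hne
      exact ih p.2.length (by omega) (by omega) (e2 ▸ hp6)
    apply hp3
    rw [e1, e2, ha, hb]

lemma isUlam_replicate_iff (k : ℕ) : IsUlam (List.replicate k false) ↔ k = 1 := by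
  constructor
  · intro h
    by_contra hne
    rcases Nat.lt_or_ge k 2 with hk | hk
    · interval_cases k
      · exact h
      · exact hne rfl
    · exact not_isUlam_replicate k hk h
  · rintro rfl
    exact isUlam_single false

lemma wordTwo_length (x y : ℕ) : (wordTwo x y).length = x + 1 + y := by
  simp [wordTwo]; omega

lemma wordTwo_ne_nil (x y : ℕ) : wordTwo x y ≠ [] := by
  intro h
  have := congrArg List.length h
  simp [wordTwo_length] at this

lemma true_mem_wordTwo (x y : ℕ) : true ∈ wordTwo x y := by
  simp [wordTwo]

lemma wordTwo_ne_replicate (x y k : ℕ) : wordTwo x y ≠ List.replicate k false := by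
  intro h
  have := h ▸ true_mem_wordTwo x y
  exact absurd (List.eq_of_mem_replicate this) (by simp)

lemma wordTwo_decomp1 {k x : ℕ} (hk : k ≤ x) (a : ℕ) :
    wordTwo x a = List.replicate k false ++ wordTwo (x-k) a := by
  unfold wordTwo
  conv_lhs => rw [show x = k + (x-k) by omega]
  rw [List.replicate_add]
  simp only [List.append_assoc]

lemma wordTwo_decomp2 {j a : ℕ} (hj : j ≤ a) (x : ℕ) :
    wordTwo x a = wordTwo x j ++ List.replicate (a-j) false := by
  unfold wordTwo
  conv_lhs => rw [show a = j + (a-j) by omega]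
  rw [List.replicate_add]
  simp only [List.append_assoc]

lemma wordTwo_split {x a : ℕ} {u v : List Bool} (hu : u ≠ []) (hv : v ≠ [])
    (h : wordTwo x a = u ++ v) :
    (∃ k, 1 ≤ k ∧ k ≤ x ∧ u = List.replicate k false ∧ v = wordTwo (x-k) a) ∨
    (∃ j, j < a ∧ u = wordTwo x j ∧ v = List.replicate (a-j) false) := by
  have hlen : u.length + v.length = x + 1 + a := by
    have := congrArg List.length h
    simpa [wordTwo_length] using this.symm
  have hu1 : 0 < u.length := List.length_pos_iff.mpr hu
  have hv1 : 0 < v.length := List.length_pos_iff.mpr hv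
  by_cases hkx : u.length ≤ x
  · left
    refine ⟨u.length, hu1, hkx, ?_⟩
    have hd := wordTwo_decomp1 hkx a
    rw [hd] at h
    have := List.append_inj h.symm (by simp)
    exact ⟨this.1, this.2⟩
  · right
    have ha1 : 1 ≤ a := by omega
    refine ⟨u.length - x - 1, by omega, ?_⟩
    have hd := wordTwo_decomp2 (j := u.length - x - 1) (a := a) (by omega) x
    rw [hd] at h
    have hlen2 : (wordTwo x (u.length - x - 1)).length = u.length := by
      rw [wordTwo_length]; omega
    have := List.append_inj h hlen2
    exact ⟨this.1.symm, this.2.symm⟩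

lemma existsUnique_pair_or {α : Type*} {P Q : Prop} {pa pb : α} (hne : pa ≠ pb) :
    (∃! p, (p = pa ∧ P) ∨ (p = pb ∧ Q)) ↔ ((P ∧ ¬Q) ∨ (Q ∧ ¬P)) := by
  constructor
  · rintro ⟨p, hp, hun⟩
    rcases hp with ⟨rfl, hP⟩ | ⟨rfl, hQ⟩
    · left
      refine ⟨hP, fun hQ => hne ?_⟩
      exact (hun pb (Or.inr ⟨rfl, hQ⟩)).symm
    · right
      refine ⟨hQ, fun hP => hne ?_⟩
      exact hun pa (Or.inl ⟨rfl, hP⟩)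
  · rintro (⟨hP, hnQ⟩ | ⟨hQ, hnP⟩)
    · refine ⟨pa, Or.inl ⟨rfl, hP⟩, ?_⟩
      rintro q (⟨rfl, _⟩ | ⟨rfl, hQ⟩)
      · rfl
      · exact absurd hQ hnQ
    · refine ⟨pb, Or.inr ⟨rfl, hQ⟩, ?_⟩
      rintro q (⟨rfl, hP⟩ | ⟨rfl, _⟩)
      · exact absurd hP hnP
      · rfl


lemma testBit_div_pow (x d j : ℕ) : (x / 2^d).testBit j = x.testBit (d+j) := by
  rw [← Nat.shiftRight_eq_div_pow, Nat.testBit_shiftRight]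

lemma landZ {x a : ℕ} : x &&& a = 0 ↔ ∀ i, x.testBit i = false ∨ a.testBit i = false := by
  constructor
  · intro h i
    have h2 : (x &&& a).testBit i = false := by rw [h]; exact Nat.zero_testBit i
    rw [Nat.testBit_land] at h2
    rcases Bool.and_eq_false_iff.mp h2 with h3 | h3 <;> tauto
  · intro h
    apply Nat.eq_of_testBit_eq
    intro i
    rw [Nat.testBit_land, Nat.zero_testBit]
    rcases h i with h3 | h3 <;> simp [h3]

lemma land_split {D a x : ℕ} : a &&& x = 0 ↔ (a % 2^D) &&& (x % 2^D) = 0 ∧ (a / 2^D) &&& (x / 2^D) = 0 := by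
  simp only [landZ, Nat.testBit_mod_two_pow, testBit_div_pow]
  constructor
  · intro h
    refine ⟨fun i => ?_, fun i => ?_⟩
    · rcases h i with h3 | h3 <;> simp [h3]
    · exact h (D+i)
  · rintro ⟨h1, h2⟩ i
    by_cases hi : i < D
    · rcases h1 i with h3 | h3 <;> simp [hi] at h3 <;> tauto
    · have := h2 (i - D)
      rwa [Nat.add_sub_cancel' (Nat.le_of_not_lt hi)] at this

lemma tb_two_mul (a i : ℕ) : (2*a).testBit (i+1) = a.testBit i := by
  rw [Nat.testBit_add_one]; congr 1; omega

lemma tb_two_mul_one (a i : ℕ) : (2*a+1).testBit (i+1) = a.testBit i := by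
  rw [Nat.testBit_add_one]; congr 1; omega

lemma land_two_mul {a x : ℕ} : (2*a) &&& x = 0 ↔ a &&& (x/2) = 0 := by
  simp only [landZ]
  constructor
  · intro h i
    have := h (i+1)
    rwa [tb_two_mul, ← Nat.testBit_div_two] at this
  · intro h i
    cases i with
    | zero => left; simp [Nat.testBit_zero, Nat.mul_mod_right]
    | succ j =>
      have := h j
      rwa [← tb_two_mul a j, Nat.testBit_div_two x j] at this

lemma land_two_mul_add_one {a x : ℕ} : (2*a+1) &&& x = 0 ↔ x % 2 = 0 ∧ a &&& (x/2) = 0 := by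
  simp only [landZ]
  constructor
  · intro h
    constructor
    · rcases h 0 with h3 | h3
      · simp [Nat.testBit_zero, Nat.mul_add_mod] at h3
      · simpa [Nat.testBit_zero, Nat.mod_two_eq_zero_or_one] using h3
    · intro i
      have := h (i+1)
      rwa [tb_two_mul_one, ← Nat.testBit_div_two] at this
  · rintro ⟨hx, h⟩ i
    cases i with
    | zero => right; simp [Nat.testBit_zero, hx]
    | succ j =>
      have := h j
      rwa [← tb_two_mul_one a j, Nat.testBit_div_two x j] at this

lemma land_comm' (a x : ℕ) : a &&& x = x &&& a := Nat.land_comm a x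

lemma one_land {x : ℕ} : 1 &&& x = 0 ↔ x % 2 = 0 := by
  have := @land_two_mul_add_one 0 x
  simp only [Nat.mul_zero, Nat.zero_add, Nat.zero_and] at this
  simpa using this

lemma zero_land (x : ℕ) : 0 &&& x = 0 := Nat.zero_and x

lemma land_ne_zero_of_odd {a x : ℕ} (ha : a % 2 = 1) (hx : x % 2 = 1) : a &&& x ≠ 0 := by
  intro h
  rcases landZ.mp h 0 with h3 | h3 <;> simp [Nat.testBit_zero] at h3 <;> omega

/-- all low bits set implies large -/
lemma ge_of_all_bits {n e : ℕ} (h : ∀ j, j < e → n.testBit j = true) : 2^e - 1 ≤ n := by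
  induction e generalizing n with
  | zero => omega
  | succ e ih =>
    have h0 : n % 2 = 1 := by
      have := h 0 (by omega); simpa [Nat.testBit_zero] using this
    have hh : 2^e - 1 ≤ n / 2 := by
      apply ih; intro j hj
      rw [Nat.testBit_div_two]; exact h (j+1) (by omega)
    have h2 : n = 2 * (n/2) + 1 := by omega
    have := Nat.one_le_two_pow (n := e)
    omega

lemma ge_of_high_bits {n e k : ℕ} (h : ∀ i, k ≤ i → i < e → n.testBit i = true) :
    2^e - 2^k ≤ n := by
  by_cases hke : k ≤ e
  · have h1 : 2^(e-k) - 1 ≤ n / 2^k := by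
      apply ge_of_all_bits; intro j hj
      rw [testBit_div_pow]; exact h (k+j) (by omega) (by omega)
    have h2 : 2^k * (n / 2^k) ≤ n := by
      have := Nat.div_add_mod n (2^k); omega
    have h3 : 2^k * (2^(e-k) - 1) ≤ 2^k * (n / 2^k) := Nat.mul_le_mul_left _ h1
    have h4 : 2^k * (2^(e-k) - 1) = 2^e - 2^k := by
      have : 2^k * 2^(e-k) = 2^e := by rw [← pow_add]; congr 1; omega
      rw [Nat.mul_sub, this, mul_one]
    omega
  · have : 2^e ≤ 2^k := Nat.pow_le_pow_right (by norm_num) (by omega)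
    omega

/-- exists a zero bit below e -/
lemma exists_zero_bit {n e : ℕ} (h1 : n < 2^e) (h2 : n ≠ 2^e - 1) :
    ∃ j, j < e ∧ n.testBit j = false := by
  by_contra hc
  push_neg at hc
  have : ∀ j, j < e → n.testBit j = true := by
    intro j hj; have := hc j hj; revert this; cases n.testBit j <;> simp
  have := ge_of_all_bits this
  omega

lemma disjoint_sum_lt {a b e : ℕ} (ha : a < 2^e) (hb : b < 2^e) (h : a &&& b = 0) :
    a + b ≤ 2^e - 1 := by
  induction e generalizing a b with
  | zero => omega
  | succ e ih =>
    have h2 : (a/2) &&& (b/2) = 0 := by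
      rw [landZ] at h ⊢; intro i
      have := h (i+1); simpa [Nat.testBit_add_one] using this
    have h0 : ¬(a % 2 = 1 ∧ b % 2 = 1) := by
      rintro ⟨ha1, hb1⟩; exact land_ne_zero_of_odd ha1 hb1 h
    have ih2 := ih (a := a/2) (b := b/2) (by omega) (by omega) h2
    have := Nat.one_le_two_pow (n := e)
    omega

/-- a + b all-ones implies disjoint -/
lemma land_eq_zero_of_add_eq {a b e : ℕ} (h : a + b = 2^e - 1) : a &&& b = 0 := by
  induction e generalizing a b with
  | zero =>
    have : a = 0 := by omega
    have hb : b = 0 := by omega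
    simp [this, hb]
  | succ e ih =>
    have hone := Nat.one_le_two_pow (n := e)
    have hodd : (a + b) % 2 = 1 := by
      rw [h]; have : (2:ℕ)^(e+1) = 2 * 2^e := by ring
      omega
    have hpar : ¬(a % 2 = 1 ∧ b % 2 = 1) ∧ ¬(a % 2 = 0 ∧ b % 2 = 0) := by omega
    have hh : a/2 + b/2 = 2^e - 1 := by
      have : (2:ℕ)^(e+1) = 2 * 2^e := by ring
      omega
    have := ih hh
    rw [landZ] at this ⊢
    intro i
    cases i with
    | zero =>
      simp only [Nat.testBit_zero]
      rcases Nat.mod_two_eq_zero_or_one a with h1 | h1 <;> rcases Nat.mod_two_eq_zero_or_one b with h2 | h2 <;>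
        simp [h1, h2] <;> omega
    | succ j => simpa [Nat.testBit_add_one] using this j

lemma add_eq_or_of_land_eq_zero {a b : ℕ} (h : a &&& b = 0) : a + b = a ||| b := by
  induction a using Nat.strong_induction_on generalizing b with
  | _ a ih =>
    rcases Nat.eq_zero_or_pos (a + b) with h0 | h0
    · have : a = 0 ∧ b = 0 := by omega
      simp [this.1, this.2]
    have h2 : (a/2) &&& (b/2) = 0 := by
      rw [landZ] at h ⊢; intro i
      have := h (i+1); simpa [Nat.testBit_add_one] using this
    have h0' : ¬(a % 2 = 1 ∧ b % 2 = 1) := by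
      rintro ⟨ha1, hb1⟩; exact land_ne_zero_of_odd ha1 hb1 h
    have key : a ||| b = 2 * (a/2 ||| b/2) + (a % 2 + b % 2) := by
      apply Nat.eq_of_testBit_eq
      intro i
      cases i with
      | zero =>
        simp only [Nat.testBit_zero, Nat.testBit_or]
        rcases Nat.mod_two_eq_zero_or_one a with h1 | h1 <;> rcases Nat.mod_two_eq_zero_or_one b with h2 | h2 <;>
          simp [h1, h2, Nat.mul_add_mod] <;> omega
      | succ j =>
        simp only [Nat.testBit_add_one, Nat.or_div_two]
        have hd : (2 * (a/2 ||| b/2) + (a % 2 + b % 2)) / 2 = a/2 ||| b/2 := by omega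
        rw [hd]
    rcases Nat.eq_zero_or_pos a with ha0 | ha0
    · simp [ha0]
    have ihh := ih (a/2) (by omega) h2
    have : a = 2*(a/2) + a % 2 := by omega
    have hb : b = 2*(b/2) + b % 2 := by omega
    omega

lemma lor_lt_two_pow {a b e : ℕ} (ha : a < 2^e) (hb : b < 2^e) : a ||| b < 2^e :=
  Nat.or_lt_two_pow ha hb


lemma land_xor_rec : ∀ n x a : ℕ, x + a = n → 1 ≤ n →
    ((x &&& a = 0) ↔
      ((1 ≤ x ∧ (x-1) &&& a = 0) ∧ ¬(1 ≤ a ∧ x &&& (a-1) = 0)) ∨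
      ((1 ≤ a ∧ x &&& (a-1) = 0) ∧ ¬(1 ≤ x ∧ (x-1) &&& a = 0))) := by
  intro n
  induction n using Nat.strong_induction_on with
  | _ n ih =>
    intro x a hxa hn
    rcases Nat.mod_two_eq_zero_or_one x with hx | hx <;> rcases Nat.mod_two_eq_zero_or_one a with ha | ha
    · -- both even
      obtain ⟨m, rfl⟩ : ∃ m, x = 2*m := ⟨x/2, by omega⟩
      obtain ⟨l, rfl⟩ : ∃ l, a = 2*l := ⟨a/2, by omega⟩
      have hL : (2*m) &&& (2*l) = 0 ↔ m &&& l = 0 := by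
        rw [land_two_mul]; simp [Nat.mul_div_cancel_left]
      have hA : (1 ≤ 2*m ∧ (2*m-1) &&& (2*l) = 0) ↔ (1 ≤ m ∧ (m-1) &&& l = 0) := by
        constructor
        · rintro ⟨h1, h2⟩
          refine ⟨by omega, ?_⟩
          rw [show 2*m-1 = 2*(m-1)+1 by omega, land_two_mul_add_one] at h2
          simpa [Nat.mul_div_cancel_left] using h2.2
        · rintro ⟨h1, h2⟩
          refine ⟨by omega, ?_⟩
          rw [show 2*m-1 = 2*(m-1)+1 by omega, land_two_mul_add_one]
          refine ⟨by omega, ?_⟩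
          simpa [Nat.mul_div_cancel_left] using h2
      have hB : (1 ≤ 2*l ∧ (2*m) &&& (2*l-1) = 0) ↔ (1 ≤ l ∧ m &&& (l-1) = 0) := by
        constructor
        · rintro ⟨h1, h2⟩
          refine ⟨by omega, ?_⟩
          rw [land_comm', show 2*l-1 = 2*(l-1)+1 by omega, land_two_mul_add_one] at h2
          have := h2.2
          rw [land_comm'] at this
          simpa [Nat.mul_div_cancel_left] using this
        · rintro ⟨h1, h2⟩
          refine ⟨by omega, ?_⟩
          rw [land_comm', show 2*l-1 = 2*(l-1)+1 by omega, land_two_mul_add_one]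
          refine ⟨by omega, ?_⟩
          rw [land_comm']
          simpa [Nat.mul_div_cancel_left] using h2
      rw [hL, hA, hB]
      exact ih (m + l) (by omega) m l rfl (by omega)
    · -- x even, a odd
      obtain ⟨m, rfl⟩ : ∃ m, x = 2*m := ⟨x/2, by omega⟩
      obtain ⟨l, rfl⟩ : ∃ l, a = 2*l+1 := ⟨a/2, by omega⟩
      have hL : (2*m) &&& (2*l+1) = 0 ↔ m &&& l = 0 := by
        rw [land_two_mul]
        simp [Nat.mul_add_div, Nat.mul_div_cancel_left]
      have hB : (1 ≤ 2*l+1 ∧ (2*m) &&& (2*l+1-1) = 0) ↔ m &&& l = 0 := by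
        rw [show 2*l+1-1 = 2*l by omega, land_two_mul]
        simp [Nat.mul_div_cancel_left]
      have hA : ¬(1 ≤ 2*m ∧ (2*m-1) &&& (2*l+1) = 0) := by
        rintro ⟨h1, h2⟩
        have hmo : (2*m-1) % 2 = 1 := by omega
        exact land_ne_zero_of_odd hmo (by omega) h2
      rw [hL, hB]
      tauto
    · -- x odd, a even
      obtain ⟨m, rfl⟩ : ∃ m, x = 2*m+1 := ⟨x/2, by omega⟩
      obtain ⟨l, rfl⟩ : ∃ l, a = 2*l := ⟨a/2, by omega⟩
      have hL : (2*m+1) &&& (2*l) = 0 ↔ m &&& l = 0 := by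
        rw [land_two_mul_add_one]
        simp [Nat.mul_div_cancel_left]
      have hA : (1 ≤ 2*m+1 ∧ (2*m+1-1) &&& (2*l) = 0) ↔ m &&& l = 0 := by
        rw [show 2*m+1-1 = 2*m by omega, land_two_mul]
        simp [Nat.mul_div_cancel_left]
      have hB : ¬(1 ≤ 2*l ∧ (2*m+1) &&& (2*l-1) = 0) := by
        rintro ⟨h1, h2⟩
        have hlo : (2*l-1) % 2 = 1 := by omega
        exact land_ne_zero_of_odd (by omega) hlo h2
      rw [hL, hA]
      tauto
    · -- both odd
      obtain ⟨m, rfl⟩ : ∃ m, x = 2*m+1 := ⟨x/2, by omega⟩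
      obtain ⟨l, rfl⟩ : ∃ l, a = 2*l+1 := ⟨a/2, by omega⟩
      have hL : ¬((2*m+1) &&& (2*l+1) = 0) :=
        land_ne_zero_of_odd (by omega) (by omega)
      have hA : (1 ≤ 2*m+1 ∧ (2*m+1-1) &&& (2*l+1) = 0) ↔ m &&& l = 0 := by
        rw [show 2*m+1-1 = 2*m by omega, land_two_mul]
        simp [Nat.mul_add_div, Nat.mul_div_cancel_left]
      have hB : (1 ≤ 2*l+1 ∧ (2*m+1) &&& (2*l+1-1) = 0) ↔ m &&& l = 0 := by
        rw [show 2*l+1-1 = 2*l by omega, land_comm', land_two_mul, land_comm']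
        simp [Nat.mul_add_div, Nat.mul_div_cancel_left]
      rw [hA, hB]
      tauto

theorem isUlam_wordTwo_aux : ∀ n x a : ℕ, x + a = n → (IsUlam (wordTwo x a) ↔ x &&& a = 0) := by
  intro n
  induction n using Nat.strong_induction_on with
  | _ n ih =>
    intro x a hxa
    rcases Nat.eq_zero_or_pos n with h0 | h0
    · have hx : x = 0 := by omega
      have ha : a = 0 := by omega
      subst hx; subst ha
      constructor
      · intro; rfl
      · intro
        have : wordTwo 0 0 = [true] := rfl
        rw [this]
        exact isUlam_single true
    · have hlen : 2 ≤ (wordTwo x a).length := by rw [wordTwo_length]; omega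
      rw [isUlam_cons hlen]
      have valid_iff : ∀ p : List Bool × List Bool,
          (p.1 ≠ [] ∧ p.2 ≠ [] ∧ p.1 ≠ p.2 ∧ wordTwo x a = p.1 ++ p.2 ∧ IsUlam p.1 ∧ IsUlam p.2)
          ↔ ((p = ([false], wordTwo (x-1) a) ∧ (1 ≤ x ∧ (x-1) &&& a = 0)) ∨
             (p = (wordTwo x (a-1), [false]) ∧ (1 ≤ a ∧ x &&& (a-1) = 0))) := by
        rintro ⟨u, v⟩
        constructor
        · rintro ⟨h1, h2, h3, h4, h5, h6⟩
          dsimp only at h1 h2 h3 h4 h5 h6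
          rcases wordTwo_split h1 h2 h4 with ⟨k, hk1, hkx, hu, hv⟩ | ⟨j, hj, hu, hv⟩
          · have hk : k = 1 := by
              rw [hu] at h5; exact (isUlam_replicate_iff k).mp h5
            subst hk
            left
            refine ⟨?_, hkx, ?_⟩
            · rw [Prod.mk.injEq]
              exact ⟨by rw [hu]; rfl, hv⟩
            · rw [hv] at h6
              exact (ih (x - 1 + a) (by omega) (x-1) a rfl).mp h6
          · have hj1 : a - j = 1 := by
              rw [hv] at h6; exact (isUlam_replicate_iff (a-j)).mp h6
            have hja : j = a - 1 := by omega
            subst hja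
            right
            refine ⟨?_, by omega, ?_⟩
            · rw [Prod.mk.injEq]
              exact ⟨hu, by rw [hv, hj1]; rfl⟩
            · rw [hu] at h5
              exact (ih (x + (a-1)) (by omega) x (a-1) rfl).mp h5
        · rintro (⟨hp, hx1, hA⟩ | ⟨hp, ha1, hB⟩)
          · rw [Prod.mk.injEq] at hp
            obtain ⟨rfl, rfl⟩ := hp
            dsimp only
            refine ⟨by simp, wordTwo_ne_nil _ _, ?_, ?_, isUlam_single false, ?_⟩
            · intro hcon
              exact wordTwo_ne_replicate (x-1) a 1 (by rw [← hcon]; rfl)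
            · have := wordTwo_decomp1 (k := 1) (x := x) (by omega) a
              rw [this]; rfl
            · exact (ih (x - 1 + a) (by omega) (x-1) a rfl).mpr hA
          · rw [Prod.mk.injEq] at hp
            obtain ⟨rfl, rfl⟩ := hp
            dsimp only
            refine ⟨wordTwo_ne_nil _ _, by simp, ?_, ?_, ?_, isUlam_single false⟩
            · exact fun hcon => wordTwo_ne_replicate x (a-1) 1 (by rw [hcon]; rfl)
            · have := wordTwo_decomp2 (j := a-1) (a := a) (by omega) x
              rw [this, show a - (a-1) = 1 by omega]
              rfl
            · exact (ih (x + (a-1)) (by omega) x (a-1) rfl).mpr hB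
      rw [existsUnique_congr valid_iff]
      have hne : (([false], wordTwo (x-1) a) : List Bool × List Bool) ≠ (wordTwo x (a-1), [false]) := by
        rw [Ne, Prod.mk.injEq]
        rintro ⟨hc, -⟩
        exact wordTwo_ne_replicate x (a-1) 1 (by rw [← hc]; rfl)
      rw [existsUnique_pair_or hne]
      exact (land_xor_rec n x a hxa h0).symm

theorem isUlam_wordTwo (x a : ℕ) : IsUlam (wordTwo x a) ↔ x &&& a = 0 :=
  isUlam_wordTwo_aux (x+a) x a rfl
def cnt (y x z : ℕ) : ℕ :=
  ((Finset.range (y+1)).filter (fun a => x &&& a = 0 ∧ (y - a) &&& z = 0)).card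

def loP (x z r : ℕ) : Prop := r ≤ 1 ∧ x &&& r = 0 ∧ (1 - r) &&& z = 0
def hiP (d x z r : ℕ) : Prop := 2 ≤ r ∧ x &&& r = 0 ∧ (2^d + 1 - r) &&& z = 0

instance (x z r : ℕ) : Decidable (loP x z r) := by unfold loP; infer_instance
instance (d x z r : ℕ) : Decidable (hiP d x z r) := by unfold hiP; infer_instance

def c2v (d x z : ℕ) : ℕ := ∑ r ∈ Finset.range (2^d), (if loP x z r then 1 else 0)
def c1v (d x z : ℕ) : ℕ := ∑ r ∈ Finset.range (2^d), (if hiP d x z r then 1 else 0)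

lemma cnt_eq_sum (y x z : ℕ) :
    cnt y x z = ∑ a ∈ Finset.range (y+1), (if x &&& a = 0 ∧ (y - a) &&& z = 0 then 1 else 0) :=
  Finset.card_filter _ _

lemma sum_range_mul (f : ℕ → ℕ) (D n : ℕ) :
    ∑ i ∈ Finset.range (D*n), f i = ∑ q ∈ Finset.range n, ∑ r ∈ Finset.range D, f (D*q + r) := by
  induction n with
  | zero => simp
  | succ n ih =>
    rw [show D*(n+1) = D*n + D by ring, Finset.sum_range_add, ih, Finset.sum_range_succ]

lemma sum_range_two_mul (f : ℕ → ℕ) (n : ℕ) :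
    ∑ i ∈ Finset.range (2*n), f i = ∑ q ∈ Finset.range n, (f (2*q) + f (2*q+1)) := by
  rw [sum_range_mul]
  apply Finset.sum_congr rfl
  intro q _
  rw [Finset.sum_range_succ, Finset.sum_range_one]
  norm_num

lemma two_le_two_pow {d : ℕ} (hd : 1 ≤ d) : 2 ≤ 2^d := by
  calc 2 = 2^1 := rfl
  _ ≤ 2^d := Nat.pow_le_pow_right (by norm_num) hd

lemma ind_lo {d y x z q r : ℕ} (hd : 1 ≤ d) (hq : q ≤ y) (hr : r ≤ 1) :
    (if x &&& (2^d*q+r) = 0 ∧ (2^d*y+1 - (2^d*q+r)) &&& z = 0 then 1 else 0)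
    = (if (x/2^d) &&& q = 0 ∧ (y - q) &&& (z/2^d) = 0 then 1 else 0) *
        (if loP (x % 2^d) (z % 2^d) r then 1 else 0) := by
  have hD2 : 2 ≤ 2^d := two_le_two_pow hd
  have hmod : (2^d*q+r) % 2^d = r := by rw [Nat.mul_add_mod]; exact Nat.mod_eq_of_lt (by omega)
  have hdiv : (2^d*q+r) / 2^d = q := by
    rw [Nat.mul_add_div (by omega)]
    rw [Nat.div_eq_of_lt (by omega)]
    omega
  have hsub : 2^d*y+1 - (2^d*q+r) = 2^d*(y-q) + (1-r) := by
    have h1 : 2^d*y = 2^d*q + 2^d*(y-q) := by rw [← Nat.mul_add]; congr 1; omega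
    omega
  have hm2 : (2^d*(y-q) + (1-r)) % 2^d = 1-r := by
    rw [Nat.mul_add_mod]; exact Nat.mod_eq_of_lt (by omega)
  have hq2 : (2^d*(y-q) + (1-r)) / 2^d = y-q := by
    rw [Nat.mul_add_div (by omega)]
    rw [Nat.div_eq_of_lt (by omega)]
    omega
  have hiff : (x &&& (2^d*q+r) = 0 ∧ (2^d*y+1 - (2^d*q+r)) &&& z = 0)
      ↔ (((x/2^d) &&& q = 0 ∧ (y - q) &&& (z/2^d) = 0) ∧ loP (x%2^d) (z%2^d) r) := by
    rw [land_split (D := d) (a := x), hsub,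
      land_split (D := d) (a := 2^d*(y-q) + (1-r)) (x := z), hmod, hdiv, hm2, hq2]
    unfold loP
    constructor
    · rintro ⟨⟨hxl, hxh⟩, hzl, hzh⟩; exact ⟨⟨hxh, hzh⟩, hr, hxl, hzl⟩
    · rintro ⟨⟨hxh, hzh⟩, _, hxl, hzl⟩; exact ⟨⟨hxl, hxh⟩, hzl, hzh⟩
  rw [if_congr hiff rfl rfl]
  by_cases hA : ((x/2^d) &&& q = 0 ∧ (y - q) &&& (z/2^d) = 0) <;>
    by_cases hlo : loP (x%2^d) (z%2^d) r <;> simp [hA, hlo]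

lemma ind_hi {d y x z q r : ℕ} (hd : 1 ≤ d) (hq : q < y) (hr2 : 2 ≤ r) (hr : r < 2^d) :
    (if x &&& (2^d*q+r) = 0 ∧ (2^d*y+1 - (2^d*q+r)) &&& z = 0 then 1 else 0)
    = (if (x/2^d) &&& q = 0 ∧ (y - 1 - q) &&& (z/2^d) = 0 then 1 else 0) *
        (if hiP d (x % 2^d) (z % 2^d) r then 1 else 0) := by
  have hD2 : 2 ≤ 2^d := two_le_two_pow hd
  have hmod : (2^d*q+r) % 2^d = r := by rw [Nat.mul_add_mod]; exact Nat.mod_eq_of_lt hr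
  have hdiv : (2^d*q+r) / 2^d = q := by
    rw [Nat.mul_add_div (by omega)]
    rw [Nat.div_eq_of_lt hr]
    omega
  have hsub : 2^d*y+1 - (2^d*q+r) = 2^d*(y-1-q) + (2^d+1-r) := by
    have h1 : 2^d*y = 2^d*q + 2^d*1 + 2^d*(y-1-q) := by
      rw [← Nat.mul_add, ← Nat.mul_add]; congr 1; omega
    omega
  have hm2 : (2^d*(y-1-q) + (2^d+1-r)) % 2^d = 2^d+1-r := by
    rw [Nat.mul_add_mod]; exact Nat.mod_eq_of_lt (by omega)
  have hq2 : (2^d*(y-1-q) + (2^d+1-r)) / 2^d = y-1-q := by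
    rw [Nat.mul_add_div (by omega)]
    rw [Nat.div_eq_of_lt (by omega)]
    omega
  have hiff : (x &&& (2^d*q+r) = 0 ∧ (2^d*y+1 - (2^d*q+r)) &&& z = 0)
      ↔ (((x/2^d) &&& q = 0 ∧ (y - 1 - q) &&& (z/2^d) = 0) ∧ hiP d (x%2^d) (z%2^d) r) := by
    rw [land_split (D := d) (a := x), hsub,
      land_split (D := d) (a := 2^d*(y-1-q) + (2^d+1-r)) (x := z), hmod, hdiv, hm2, hq2]
    unfold hiP
    constructor
    · rintro ⟨⟨hxl, hxh⟩, hzl, hzh⟩; exact ⟨⟨hxh, hzh⟩, hr2, hxl, hzl⟩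
    · rintro ⟨⟨hxh, hzh⟩, _, hxl, hzl⟩; exact ⟨⟨hxl, hxh⟩, hzl, hzh⟩
  rw [if_congr hiff rfl rfl]
  by_cases hA : ((x/2^d) &&& q = 0 ∧ (y - 1 - q) &&& (z/2^d) = 0) <;>
    by_cases hhi : hiP d (x%2^d) (z%2^d) r <;> simp [hA, hhi]

lemma c2v_eval (d x z : ℕ) (hd : 1 ≤ d) :
    c2v d x z = (if loP x z 0 then 1 else 0) + (if loP x z 1 then 1 else 0) := by
  have hD2 : 2 ≤ 2^d := two_le_two_pow hd
  unfold c2v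
  rw [← Finset.sum_subset (Finset.range_subset_range.mpr hD2)]
  · rw [Finset.sum_range_succ, Finset.sum_range_one]
  · intro r _ hr
    rw [Finset.mem_range] at hr
    rw [if_neg]
    unfold loP
    omega

lemma cnt_split {d y x z : ℕ} (hd : 1 ≤ d) (hy : 1 ≤ y) :
    cnt (2^d * y + 1) x z =
      c2v d (x % 2^d) (z % 2^d) * cnt y (x / 2^d) (z / 2^d) +
      c1v d (x % 2^d) (z % 2^d) * cnt (y-1) (x / 2^d) (z / 2^d) := by
  have hD2 : 2 ≤ 2^d := two_le_two_pow hd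
  rw [cnt_eq_sum]
  have hlen : 2^d * y + 1 + 1 = (2^d * y + 1) + 1 := rfl
  rw [show 2^d * y + 1 + 1 = (2^d*y + 1) + 1 from rfl, Finset.sum_range_succ,
    Finset.sum_range_succ, sum_range_mul]
  have step1 : ∀ q ∈ Finset.range y,
      (∑ r ∈ Finset.range (2^d),
        (if x &&& (2^d*q+r) = 0 ∧ (2^d*y+1 - (2^d*q+r)) &&& z = 0 then 1 else 0))
      = (if (x/2^d) &&& q = 0 ∧ (y - q) &&& (z/2^d) = 0 then 1 else 0) * c2v d (x%2^d) (z%2^d)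
        + (if (x/2^d) &&& q = 0 ∧ (y - 1 - q) &&& (z/2^d) = 0 then 1 else 0) * c1v d (x%2^d) (z%2^d) := by
    intro q hq
    rw [Finset.mem_range] at hq
    unfold c2v c1v
    rw [Finset.mul_sum, Finset.mul_sum, ← Finset.sum_add_distrib]
    apply Finset.sum_congr rfl
    intro r hr
    rw [Finset.mem_range] at hr
    by_cases hcase : r ≤ 1
    · rw [ind_lo hd (by omega) hcase]
      have : ¬ hiP d (x%2^d) (z%2^d) r := by unfold hiP; omega
      simp [this]
    · rw [ind_hi hd hq (by omega) hr]
      have : ¬ loP (x%2^d) (z%2^d) r := by unfold loP; omega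
      simp [this]
  rw [Finset.sum_congr rfl step1]
  have hb0 : (if x &&& (2^d*y) = 0 ∧ (2^d*y+1 - (2^d*y)) &&& z = 0 then 1 else 0)
      = (if (x/2^d) &&& y = 0 ∧ (y - y) &&& (z/2^d) = 0 then 1 else 0) *
          (if loP (x % 2^d) (z % 2^d) 0 then 1 else 0) := by
    have := ind_lo (d := d) (y := y) (x := x) (z := z) (q := y) (r := 0) hd (le_refl y) (by omega)
    simpa using this
  have hb1 : (if x &&& (2^d*y+1) = 0 ∧ (2^d*y+1 - (2^d*y+1)) &&& z = 0 then 1 else 0)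
      = (if (x/2^d) &&& y = 0 ∧ (y - y) &&& (z/2^d) = 0 then 1 else 0) *
          (if loP (x % 2^d) (z % 2^d) 1 then 1 else 0) := by
    have := ind_lo (d := d) (y := y) (x := x) (z := z) (q := y) (r := 1) hd (le_refl y) (by omega)
    simpa using this
  rw [hb0, hb1]
  rw [Finset.sum_add_distrib]
  rw [← Finset.sum_mul, ← Finset.sum_mul]
  rw [cnt_eq_sum, cnt_eq_sum]
  rw [show y - 1 + 1 = y by omega]
  rw [Finset.sum_range_succ (fun a => if (x/2^d) &&& a = 0 ∧ (y - a) &&& (z/2^d) = 0 then 1 else 0) y]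
  have hz : ∀ q, y - 1 - q = (y-1) - q := fun q => rfl
  rw [c2v_eval d _ _ hd]
  ring
def gv (e x z : ℕ) : ℕ :=
  ∑ a ∈ Finset.range (2^e), (if 1 ≤ a ∧ x &&& a = 0 ∧ (2^e - a) &&& z = 0 then 1 else 0)

def hv (e x z : ℕ) : ℕ :=
  ∑ a ∈ Finset.range (2^e), (if x &&& a = 0 ∧ (2^e - 1 - a) &&& z = 0 then 1 else 0)

lemma land_left_two_mul {x a : ℕ} : x &&& (2*a) = 0 ↔ (x/2) &&& a = 0 := by
  rw [land_comm', land_two_mul, land_comm']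

lemma land_left_two_mul_add_one {x a : ℕ} : x &&& (2*a+1) = 0 ↔ x % 2 = 0 ∧ (x/2) &&& a = 0 := by
  rw [land_comm', land_two_mul_add_one, land_comm']

lemma c1v_eq {d : ℕ} (hd : 1 ≤ d) (x z : ℕ) :
    c1v d x z = ((if x % 2 = 0 then 1 else 0) + (if z % 2 = 0 then 1 else 0)) *
      gv (d-1) (x/2) (z/2) := by
  obtain ⟨e, rfl⟩ : ∃ e, d = e + 1 := ⟨d - 1, by omega⟩
  unfold c1v gv
  simp only [Nat.add_sub_cancel]
  rw [show (2:ℕ)^(e+1) = 2*2^e by ring, sum_range_two_mul]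
  have key : ∀ a ∈ Finset.range (2^e),
      ((if hiP (e+1) x z (2*a) then 1 else 0) + if hiP (e+1) x z (2*a+1) then 1 else 0)
      = ((if x % 2 = 0 then 1 else 0) + (if z % 2 = 0 then 1 else 0)) *
          (if 1 ≤ a ∧ (x/2) &&& a = 0 ∧ (2^e - a) &&& (z/2) = 0 then 1 else 0) := by
    intro a ha
    rw [Finset.mem_range] at ha
    have he1 : (1:ℕ) ≤ 2^e := Nat.one_le_two_pow
    have k0 : (if hiP (e+1) x z (2*a) then 1 else 0)
      = (if z % 2 = 0 then 1 else 0) * (if 1 ≤ a ∧ (x/2) &&& a = 0 ∧ (2^e - a) &&& (z/2) = 0 then 1 else 0) := by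
      have hiff : hiP (e+1) x z (2*a) ↔ (z % 2 = 0 ∧ (1 ≤ a ∧ (x/2) &&& a = 0 ∧ (2^e - a) &&& (z/2) = 0)) := by
        unfold hiP
        rw [show 2^(e+1)+1-2*a = 2*(2^e - a)+1 by omega, land_left_two_mul, land_two_mul_add_one]
        constructor
        · rintro ⟨h1, h2, h3, h4⟩; exact ⟨h3, by omega, h2, h4⟩
        · rintro ⟨h3, h1, h2, h4⟩; exact ⟨by omega, h2, h3, h4⟩
      rw [if_congr hiff rfl rfl]
      by_cases h1 : z % 2 = 0 <;> by_cases h2 : (1 ≤ a ∧ (x/2) &&& a = 0 ∧ (2^e - a) &&& (z/2) = 0) <;>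
        simp [h1, h2]
    have k1 : (if hiP (e+1) x z (2*a+1) then 1 else 0)
      = (if x % 2 = 0 then 1 else 0) * (if 1 ≤ a ∧ (x/2) &&& a = 0 ∧ (2^e - a) &&& (z/2) = 0 then 1 else 0) := by
      have hiff : hiP (e+1) x z (2*a+1) ↔ (x % 2 = 0 ∧ (1 ≤ a ∧ (x/2) &&& a = 0 ∧ (2^e - a) &&& (z/2) = 0)) := by
        unfold hiP
        rw [show 2^(e+1)+1-(2*a+1) = 2*(2^e - a) by omega, land_left_two_mul_add_one, land_two_mul]
        constructor
        · rintro ⟨h1, ⟨h2, h3⟩, h4⟩; exact ⟨h2, by omega, h3, h4⟩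
        · rintro ⟨h2, h1, h3, h4⟩; exact ⟨by omega, ⟨h2, h3⟩, h4⟩
      rw [if_congr hiff rfl rfl]
      by_cases h1 : x % 2 = 0 <;> by_cases h2 : (1 ≤ a ∧ (x/2) &&& a = 0 ∧ (2^e - a) &&& (z/2) = 0) <;>
        simp [h1, h2]
    rw [k0, k1]
    ring
  rw [Finset.sum_congr rfl key, ← Finset.mul_sum]

lemma gv_zero (x z : ℕ) : gv 0 x z = 0 := by
  unfold gv
  apply Finset.sum_eq_zero
  intro a ha
  rw [Finset.mem_range] at ha
  rw [if_neg]
  rintro ⟨h1, -⟩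
  omega

lemma gv_succ (e x z : ℕ) :
    gv (e+1) x z = gv e (x/2) (z/2) +
      (if x % 2 = 0 ∧ z % 2 = 0 then 1 else 0) * hv e (x/2) (z/2) := by
  unfold gv hv
  rw [show (2:ℕ)^(e+1) = 2*2^e by ring, sum_range_two_mul]
  have key : ∀ a ∈ Finset.range (2^e),
      ((if 1 ≤ 2*a ∧ x &&& (2*a) = 0 ∧ (2*2^e - 2*a) &&& z = 0 then 1 else 0) +
        if 1 ≤ 2*a+1 ∧ x &&& (2*a+1) = 0 ∧ (2*2^e - (2*a+1)) &&& z = 0 then 1 else 0)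
      = (if 1 ≤ a ∧ (x/2) &&& a = 0 ∧ (2^e - a) &&& (z/2) = 0 then 1 else 0) +
          (if x % 2 = 0 ∧ z % 2 = 0 then 1 else 0) *
            (if (x/2) &&& a = 0 ∧ (2^e - 1 - a) &&& (z/2) = 0 then 1 else 0) := by
    intro a ha
    rw [Finset.mem_range] at ha
    have he1 : (1:ℕ) ≤ 2^e := Nat.one_le_two_pow
    congr 1
    · apply if_congr _ rfl rfl
      rw [show 2*2^e - 2*a = 2*(2^e - a) by omega, land_left_two_mul, land_two_mul]
      constructor
      · rintro ⟨h1, h2, h3⟩; exact ⟨by omega, h2, h3⟩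
      · rintro ⟨h1, h2, h3⟩; exact ⟨by omega, h2, h3⟩
    · have hiff : (1 ≤ 2*a+1 ∧ x &&& (2*a+1) = 0 ∧ (2*2^e - (2*a+1)) &&& z = 0)
          ↔ ((x % 2 = 0 ∧ z % 2 = 0) ∧ ((x/2) &&& a = 0 ∧ (2^e - 1 - a) &&& (z/2) = 0)) := by
        rw [show 2*2^e - (2*a+1) = 2*(2^e - 1 - a)+1 by omega, land_left_two_mul_add_one,
          land_two_mul_add_one]
        constructor
        · rintro ⟨-, ⟨h1, h2⟩, h3, h4⟩; exact ⟨⟨h1, h3⟩, h2, h4⟩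
        · rintro ⟨⟨h1, h3⟩, h2, h4⟩; exact ⟨by omega, ⟨h1, h2⟩, h3, h4⟩
      rw [if_congr hiff rfl rfl]
      by_cases h1 : (x % 2 = 0 ∧ z % 2 = 0) <;>
        by_cases h2 : ((x/2) &&& a = 0 ∧ (2^e - 1 - a) &&& (z/2) = 0) <;> simp [h1, h2]
  rw [Finset.sum_congr rfl key, Finset.sum_add_distrib, ← Finset.mul_sum]

lemma hv_zero (x z : ℕ) : hv 0 x z = 1 := by
  unfold hv
  rw [pow_zero, Finset.sum_range_one, if_pos]
  exact ⟨Nat.and_zero x, by norm_num [Nat.zero_and]⟩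

lemma hv_succ (e x z : ℕ) :
    hv (e+1) x z = ((if x % 2 = 0 then 1 else 0) + (if z % 2 = 0 then 1 else 0)) *
      hv e (x/2) (z/2) := by
  unfold hv
  rw [show (2:ℕ)^(e+1) = 2*2^e by ring, sum_range_two_mul]
  have key : ∀ a ∈ Finset.range (2^e),
      ((if x &&& (2*a) = 0 ∧ (2*2^e - 1 - 2*a) &&& z = 0 then 1 else 0) +
        if x &&& (2*a+1) = 0 ∧ (2*2^e - 1 - (2*a+1)) &&& z = 0 then 1 else 0)
      = ((if x % 2 = 0 then 1 else 0) + (if z % 2 = 0 then 1 else 0)) *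
          (if (x/2) &&& a = 0 ∧ (2^e - 1 - a) &&& (z/2) = 0 then 1 else 0) := by
    intro a ha
    rw [Finset.mem_range] at ha
    have he1 : (1:ℕ) ≤ 2^e := Nat.one_le_two_pow
    have k0 : (if x &&& (2*a) = 0 ∧ (2*2^e - 1 - 2*a) &&& z = 0 then 1 else 0)
      = (if z % 2 = 0 then 1 else 0) * (if (x/2) &&& a = 0 ∧ (2^e - 1 - a) &&& (z/2) = 0 then 1 else 0) := by
      have hiff : (x &&& (2*a) = 0 ∧ (2*2^e - 1 - 2*a) &&& z = 0)
          ↔ (z % 2 = 0 ∧ ((x/2) &&& a = 0 ∧ (2^e - 1 - a) &&& (z/2) = 0)) := by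
        rw [show 2*2^e - 1 - 2*a = 2*(2^e - 1 - a)+1 by omega, land_left_two_mul,
          land_two_mul_add_one]
        tauto
      rw [if_congr hiff rfl rfl]
      by_cases h1 : z % 2 = 0 <;> by_cases h2 : ((x/2) &&& a = 0 ∧ (2^e - 1 - a) &&& (z/2) = 0) <;>
        simp [h1, h2]
    have k1 : (if x &&& (2*a+1) = 0 ∧ (2*2^e - 1 - (2*a+1)) &&& z = 0 then 1 else 0)
      = (if x % 2 = 0 then 1 else 0) * (if (x/2) &&& a = 0 ∧ (2^e - 1 - a) &&& (z/2) = 0 then 1 else 0) := by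
      have hiff : (x &&& (2*a+1) = 0 ∧ (2*2^e - 1 - (2*a+1)) &&& z = 0)
          ↔ (x % 2 = 0 ∧ ((x/2) &&& a = 0 ∧ (2^e - 1 - a) &&& (z/2) = 0)) := by
        rw [show 2*2^e - 1 - (2*a+1) = 2*(2^e - 1 - a) by omega, land_left_two_mul_add_one,
          land_two_mul]
        tauto
      rw [if_congr hiff rfl rfl]
      by_cases h1 : x % 2 = 0 <;> by_cases h2 : ((x/2) &&& a = 0 ∧ (2^e - 1 - a) &&& (z/2) = 0) <;>
        simp [h1, h2]
    rw [k0, k1]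
    ring
  rw [Finset.sum_congr rfl key, ← Finset.mul_sum]

lemma land_parity_split {x z : ℕ} :
    x &&& z = 0 ↔ (¬(x % 2 = 1 ∧ z % 2 = 1)) ∧ (x/2) &&& (z/2) = 0 := by
  constructor
  · intro h
    refine ⟨fun hc => land_ne_zero_of_odd hc.1 hc.2 h, ?_⟩
    rw [landZ] at h ⊢
    intro i
    have := h (i+1)
    simpa [Nat.testBit_add_one] using this
  · rintro ⟨h1, h2⟩
    rcases Nat.mod_two_eq_zero_or_one x with hx | hx
    · obtain ⟨m, hm⟩ : ∃ m, x = 2*m := ⟨x/2, by omega⟩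
      have hm2 : x/2 = m := by omega
      rw [hm, land_two_mul]
      rwa [hm2] at h2
    · have hz : z % 2 = 0 := by omega
      obtain ⟨m, hm⟩ : ∃ m, z = 2*m := ⟨z/2, by omega⟩
      have hm2 : z/2 = m := by omega
      rw [land_comm', hm, land_two_mul, land_comm']
      rwa [hm2] at h2

lemma m2hv {e x z : ℕ} (hx : x < 2^e) (hz : z < 2^e) :
    min 2 (hv e x z) = if x &&& z ≠ 0 then 0 else if x + z = 2^e - 1 then 1 else 2 := by
  induction e generalizing x z with
  | zero =>
    have hx0 : x = 0 := by omega
    have hz0 : z = 0 := by omega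
    subst hx0; subst hz0
    rw [hv_zero]
    norm_num
  | succ e ih =>
    have he1 : (1:ℕ) ≤ 2^e := Nat.one_le_two_pow
    have hp : (2:ℕ)^(e+1) = 2*2^e := by ring
    have ihh := ih (x := x/2) (z := z/2) (by omega) (by omega)
    rw [hv_succ]
    rcases Nat.mod_two_eq_zero_or_one x with hxp | hxp <;> rcases Nat.mod_two_eq_zero_or_one z with hzp | hzp
    · -- both even
      have hand : x &&& z = 0 ↔ (x/2) &&& (z/2) = 0 := by
        rw [land_parity_split]
        constructor
        · tauto
        · intro h; exact ⟨by omega, h⟩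
      rw [if_pos hxp, if_pos hzp]
      by_cases hc : (x/2) &&& (z/2) = 0
      · have hA : x &&& z = 0 := hand.mpr hc
        rw [if_neg (not_not_intro hA), if_neg (show ¬ (x + z = 2^(e+1) - 1) by omega)]
        have hpos : 1 ≤ hv e (x/2) (z/2) := by
          by_contra hcon
          have h0 : hv e (x/2) (z/2) = 0 := by omega
          rw [h0, if_neg (not_not_intro hc)] at ihh
          split at ihh <;> omega
        omega
      · have hA : x &&& z ≠ 0 := fun h => hc (hand.mp h)
        rw [if_pos hA]
        have h0 : hv e (x/2) (z/2) = 0 := by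
          rw [if_pos hc] at ihh
          omega
        rw [h0]
        norm_num
    · -- x even z odd
      have hand : x &&& z = 0 ↔ (x/2) &&& (z/2) = 0 := by
        rw [land_parity_split]
        constructor
        · tauto
        · intro h; exact ⟨by omega, h⟩
      have hsum : (x + z = 2^(e+1) - 1) ↔ (x/2 + z/2 = 2^e - 1) := by omega
      rw [if_pos hxp, if_neg (by omega), show ((1:ℕ) + 0) * hv e (x/2) (z/2) = hv e (x/2) (z/2) by ring,
        ihh]
      by_cases hc : (x/2) &&& (z/2) = 0
      · have hA : x &&& z = 0 := hand.mpr hc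
        rw [if_neg (not_not_intro hc), if_neg (not_not_intro hA)]
        by_cases hs : x/2 + z/2 = 2^e - 1
        · rw [if_pos hs, if_pos (hsum.mpr hs)]
        · rw [if_neg hs, if_neg (fun hq => hs (hsum.mp hq))]
      · have hA : x &&& z ≠ 0 := fun h => hc (hand.mp h)
        rw [if_pos hc, if_pos hA]
    · -- x odd z even
      have hand : x &&& z = 0 ↔ (x/2) &&& (z/2) = 0 := by
        rw [land_parity_split]
        constructor
        · tauto
        · intro h; exact ⟨by omega, h⟩
      have hsum : (x + z = 2^(e+1) - 1) ↔ (x/2 + z/2 = 2^e - 1) := by omega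
      rw [if_neg (by omega), if_pos hzp, show ((0:ℕ) + 1) * hv e (x/2) (z/2) = hv e (x/2) (z/2) by ring,
        ihh]
      by_cases hc : (x/2) &&& (z/2) = 0
      · have hA : x &&& z = 0 := hand.mpr hc
        rw [if_neg (not_not_intro hc), if_neg (not_not_intro hA)]
        by_cases hs : x/2 + z/2 = 2^e - 1
        · rw [if_pos hs, if_pos (hsum.mpr hs)]
        · rw [if_neg hs, if_neg (fun hq => hs (hsum.mp hq))]
      · have hA : x &&& z ≠ 0 := fun h => hc (hand.mp h)
        rw [if_pos hc, if_pos hA]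
    · -- both odd
      rw [if_neg (by omega), if_neg (by omega)]
      have hxz : x &&& z ≠ 0 := land_ne_zero_of_odd hxp hzp
      rw [if_pos hxz]
      omega
lemma tb_mod_lt (x f : ℕ) : x % 2^(f+1) < 2^f ↔ x.testBit f = false := by
  have hp : (0:ℕ) < 2^f := by positivity
  have hq := Nat.div_add_mod x (2^f)
  have h3 := Nat.div_add_mod (x / 2^f) 2
  have hr : x % 2^f < 2^f := Nat.mod_lt _ hp
  have hsplit : x % 2^(f+1) = 2^f * (x / 2^f % 2) + x % 2^f := by
    have h2 : x = 2^(f+1) * (x / 2^f / 2) + (2^f * (x / 2^f % 2) + x % 2^f) := by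
      calc x = 2^f * (x/2^f) + x % 2^f := hq.symm
      _ = 2^f * (2*(x/2^f/2) + x/2^f % 2) + x % 2^f := by rw [h3]
      _ = _ := by ring
    conv_lhs => rw [h2]
    rw [Nat.mul_add_mod]
    apply Nat.mod_eq_of_lt
    rw [pow_succ]
    have := Nat.mod_two_eq_zero_or_one (x / 2^f)
    rcases this with h | h <;> rw [h] <;> omega
  rw [Nat.testBit_eq_decide_div_mod_eq]
  rcases Nat.mod_two_eq_zero_or_one (x / 2^f) with h | h
  · rw [hsplit, h]
    simp [hr]
  · rw [hsplit, h]
    simp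

def QP (x z : ℕ) : ℕ → Prop := fun f => x % 2 ^ (f + 1) < 2 ^ f ∧ z % 2 ^ (f + 1) < 2 ^ f

instance (x z : ℕ) : DecidablePred (QP x z) := fun _ => by unfold QP; infer_instance

lemma eIdx_eq (d x z : ℕ) : eIdx d x z = Nat.findGreatest (QP x z) (d-1) := rfl

lemma QP_iff (x z f : ℕ) : QP x z f ↔ (x.testBit f = false ∧ z.testBit f = false) := by
  unfold QP
  rw [tb_mod_lt, tb_mod_lt]

lemma QP_shift (x z f : ℕ) : QP x z (f+1) ↔ QP (x/2) (z/2) f := by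
  rw [QP_iff, QP_iff, Nat.testBit_add_one, Nat.testBit_add_one]

lemma mod_double (x f : ℕ) : x % 2^(f+1) = 2*((x/2) % 2^f) + x % 2 := by
  have h1 := Nat.div_add_mod (x/2) (2^f)
  have h2 := Nat.div_add_mod x 2
  have hm : (x/2) % 2^f < 2^f := Nat.mod_lt _ (by positivity)
  have key : x = 2^(f+1) * ((x/2)/2^f) + (2*((x/2) % 2^f) + x % 2) := by
    calc x = 2*(x/2) + x % 2 := h2.symm
    _ = 2*(2^f * ((x/2)/2^f) + (x/2) % 2^f) + x % 2 := by rw [h1]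
    _ = _ := by ring
  conv_lhs => rw [key]
  rw [Nat.mul_add_mod]
  apply Nat.mod_eq_of_lt
  rw [pow_succ]
  omega

lemma land_add_lor (a b : ℕ) : (a &&& b) + (a ||| b) = a + b := by
  induction a using Nat.strong_induction_on generalizing b with
  | _ a ih =>
    rcases Nat.eq_zero_or_pos a with rfl | ha0
    · simp
    have hand : a &&& b = 2*((a/2) &&& (b/2)) + (if a % 2 = 1 ∧ b % 2 = 1 then 1 else 0) := by
      apply Nat.eq_of_testBit_eq
      intro i
      cases i with
      | zero =>
        simp only [Nat.testBit_zero, Nat.testBit_land]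
        rcases Nat.mod_two_eq_zero_or_one a with h1 | h1 <;>
          rcases Nat.mod_two_eq_zero_or_one b with h2 | h2 <;>
            simp [h1, h2, Nat.mul_add_mod] <;> omega
      | succ j =>
        simp only [Nat.testBit_add_one, Nat.and_div_two]
        have hd : (2 * (a/2 &&& b/2) + (if a % 2 = 1 ∧ b % 2 = 1 then 1 else 0)) / 2
            = a/2 &&& b/2 := by
          split <;> omega
        rw [hd]
    have hor : a ||| b = 2*((a/2) ||| (b/2)) + (if a % 2 = 1 ∨ b % 2 = 1 then 1 else 0) := by
      apply Nat.eq_of_testBit_eq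
      intro i
      cases i with
      | zero =>
        simp only [Nat.testBit_zero, Nat.testBit_or]
        rcases Nat.mod_two_eq_zero_or_one a with h1 | h1 <;>
          rcases Nat.mod_two_eq_zero_or_one b with h2 | h2 <;>
            simp [h1, h2, Nat.mul_add_mod] <;> omega
      | succ j =>
        simp only [Nat.testBit_add_one, Nat.or_div_two]
        have hd : (2 * (a/2 ||| b/2) + (if a % 2 = 1 ∨ b % 2 = 1 then 1 else 0)) / 2
            = a/2 ||| b/2 := by
          split <;> omega
        rw [hd]
    have ihh := ih (a/2) (by omega) (b := b/2)
    rcases Nat.mod_two_eq_zero_or_one a with h1 | h1 <;>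
      rcases Nat.mod_two_eq_zero_or_one b with h2 | h2 <;>
        simp only [h1, h2] at hand hor <;> simp at hand hor <;> omega

lemma exists_overlap {x z : ℕ} (h : x &&& z ≠ 0) :
    ∃ j, x.testBit j = true ∧ z.testBit j = true := by
  by_contra hc
  push_neg at hc
  apply h
  rw [landZ]
  intro i
  by_cases h1 : x.testBit i = true
  · by_cases h2 : z.testBit i = true
    · exact absurd h2 (hc i h1)
    · right; simpa using h2
  · left; simpa using h1

lemma testBit_j_lt {x j e : ℕ} (hx : x < 2^e) (h : x.testBit j = true) : j < e := by
  by_contra hc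
  have h1 := Nat.ge_two_pow_of_testBit h
  have h2 : (2:ℕ)^e ≤ 2^j := Nat.pow_le_pow_right (by norm_num) (by omega)
  omega

lemma land_mod_eq_zero {x z : ℕ} (h : x &&& z = 0) (k : ℕ) :
    (x % 2^k) &&& (z % 2^k) = 0 := by
  rw [landZ] at h ⊢
  intro i
  rcases h i with h1 | h1
  · left; rw [Nat.testBit_mod_two_pow, h1]; simp
  · right; rw [Nat.testBit_mod_two_pow, h1]; simp

lemma findGreatest_spec_pos {P : ℕ → Prop} [DecidablePred P] {n : ℕ}
    (h : 0 < Nat.findGreatest P n) : P (Nat.findGreatest P n) := by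
  obtain ⟨k, hk0, hke, hQ⟩ := Nat.findGreatest_pos.mp h
  exact Nat.findGreatest_spec hke hQ

lemma shift_findGreatest {e x z : ℕ}
    (h1 : 0 < Nat.findGreatest (QP x z) e) :
    Nat.findGreatest (QP (x/2) (z/2)) (e-1) = Nat.findGreatest (QP x z) e - 1 := by
  set G1 := Nat.findGreatest (QP x z) e with hG1
  have hG1e : G1 ≤ e := Nat.findGreatest_le (P := QP x z) e
  have hQG1 : QP x z G1 := findGreatest_spec_pos h1
  apply le_antisymm
  · by_contra hc
    push_neg at hc
    set G2 := Nat.findGreatest (QP (x/2) (z/2)) (e-1) with hG2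
    have hG2pos : 0 < G2 := by omega
    have hQG2 : QP (x/2) (z/2) G2 := findGreatest_spec_pos hG2pos
    have hQ : QP x z (G2+1) := (QP_shift _ _ _).mpr hQG2
    have hle2 : G2 ≤ e - 1 := Nat.findGreatest_le (P := QP (x/2) (z/2)) (e-1)
    exact Nat.findGreatest_is_greatest (n := e) (by omega) (by omega) hQ
  · apply Nat.le_findGreatest (by omega)
    rw [← QP_shift, show G1 - 1 + 1 = G1 by omega]
    exact hQG1

lemma no_allones_boundary {e x z : ℕ} (he : 1 ≤ e) (hx : x < 2^e) (hz : z < 2^e)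
    (hsum : x + z ≤ 2^e - 2) (hnd : x &&& z ≠ 0) :
    x % 2^(Nat.findGreatest (QP x z) (e-1)) + z % 2^(Nat.findGreatest (QP x z) (e-1)) ≠
      2^(Nat.findGreatest (QP x z) (e-1)) - 1 := by
  set G := Nat.findGreatest (QP x z) (e-1) with hG
  intro hb
  have he1 : (1:ℕ) ≤ 2^e := Nat.one_le_two_pow
  have hlal := land_add_lor x z
  have hand1 : 1 ≤ x &&& z := Nat.pos_of_ne_zero hnd
  -- step 1: a witness exists
  have hW : ∃ k, k ≤ e-1 ∧ QP x z k := by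
    by_contra hc
    push_neg at hc
    have hall : ∀ k, k < e → (x ||| z).testBit k = true := by
      intro k hk
      have hnq := hc k (by omega)
      rw [QP_iff] at hnq
      by_contra hcc
      have hff := Bool.or_eq_false_iff.mp (by simpa using hcc : (x.testBit k || z.testBit k) = false)
      exact hnq ⟨hff.1, hff.2⟩
    have h1 := ge_of_all_bits hall
    omega
  have hQG : QP x z G := by
    obtain ⟨k, hke, hQ⟩ := hW
    exact Nat.findGreatest_spec hke hQ
  -- step 3: mods disjoint
  have hmd : (x % 2^G) &&& (z % 2^G) = 0 := land_eq_zero_of_add_eq hb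
  -- step 4: overlap
  obtain ⟨j, hjx, hjz⟩ := exists_overlap hnd
  have hje : j < e := testBit_j_lt hx hjx
  rcases Nat.lt_trichotomy j G with hj | hj | hj
  · -- j < G: contradiction with hmd
    rcases landZ.mp hmd j with h1 | h1 <;> rw [Nat.testBit_mod_two_pow] at h1
    · rw [hjx] at h1; simp [hj] at h1
    · rw [hjz] at h1; simp [hj] at h1
  · -- j = G
    rw [QP_iff] at hQG
    rw [← hj] at hQG
    rw [hQG.1] at hjx
    exact Bool.false_ne_true hjx
  · -- j > G
    have hhigh : ∀ i, G+1 ≤ i → i < e → (x ||| z).testBit i = true := by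
      intro i hi1 hi2
      have hnq : ¬ QP x z i := Nat.findGreatest_is_greatest (n := e-1) (by omega) (by omega)
      rw [QP_iff] at hnq
      by_contra hcc
      have hff := Bool.or_eq_false_iff.mp (by simpa using hcc : (x.testBit i || z.testBit i) = false)
      exact hnq ⟨hff.1, hff.2⟩
    have hor := ge_of_high_bits hhigh
    have handbit : (x &&& z).testBit j = true := by
      rw [Nat.testBit_land, hjx, hjz]; rfl
    have hand2 := Nat.ge_two_pow_of_testBit handbit
    have hpow : (2:ℕ)^(G+1) ≤ 2^j := Nat.pow_le_pow_right (by norm_num) (by omega)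
    have hpow2 : (2:ℕ)^(G+1) ≤ 2^e := Nat.pow_le_pow_right (by norm_num) (by omega)
    omega

lemma E1_odd_step {e x z : ℕ} (hx : x < 2^(e+1)) (hz : z < 2^(e+1))
    (hodd : x % 2 = 1 ∨ z % 2 = 1) :
    E1 (e+1) x z = E1 e (x/2) (z/2) := by
  have he1 : (1:ℕ) ≤ 2^e := Nat.one_le_two_pow
  have hp : (2:ℕ)^(e+1) = 2*2^e := by ring
  have hQ0 : ¬ QP x z 0 := by
    rw [QP_iff]
    rintro ⟨h1, h2⟩
    simp only [Nat.testBit_zero, decide_eq_false_iff_not] at h1 h2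
    omega
  unfold E1
  rw [eIdx_eq, eIdx_eq]
  simp only [Nat.add_sub_cancel]
  have hbound : 2^(e+1) - 1 ≤ x + z ↔ 2^e - 1 ≤ x/2 + z/2 := by omega
  rcases Nat.eq_zero_or_pos (Nat.findGreatest (QP x z) e) with h1 | h1
  · have hnone : ∀ k, k ≤ e → ¬ QP x z k := by
      intro k hk
      rcases Nat.eq_zero_or_pos k with rfl | hkpos
      · exact hQ0
      · exact Nat.findGreatest_eq_zero_iff.mp h1 hkpos hk
    have h2 : Nat.findGreatest (QP (x/2) (z/2)) (e-1) = 0 := by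
      rw [Nat.findGreatest_eq_zero_iff]
      intro j hj hje
      rw [← QP_shift]
      exact hnone (j+1) (by omega)
    rw [h1, h2]
    simp only [pow_zero]
    by_cases hc : 2^(e+1) - 1 ≤ x + z
    · rw [if_pos hc, if_pos (hbound.mp hc)]
    · rw [if_neg hc, if_neg (fun hq => hc (hbound.mpr hq))]
      rw [if_neg (by omega), if_neg (by omega)]
  · rw [shift_findGreatest h1]
    obtain ⟨F, hF⟩ : ∃ F, Nat.findGreatest (QP x z) e = F + 1 := ⟨Nat.findGreatest (QP x z) e - 1, by omega⟩
    rw [hF]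
    simp only [Nat.add_sub_cancel]
    have hmx := mod_double x F
    have hmz := mod_double z F
    by_cases hc : 2^(e+1) - 1 ≤ x + z
    · rw [if_pos hc, if_pos (hbound.mp hc)]
    · rw [if_neg hc, if_neg (fun hq => hc (hbound.mpr hq))]
      have h1F : (1:ℕ) ≤ 2^F := Nat.one_le_two_pow
      have hpF : (2:ℕ)^(F+1) = 2*2^F := by ring
      have hcond : x % 2^(F+1) + z % 2^(F+1) < 2^(F+1) - 1 ↔
          (x/2) % 2^F + (z/2) % 2^F < 2^F - 1 := by omega
      by_cases hc2 : x % 2^(F+1) + z % 2^(F+1) < 2^(F+1) - 1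
      · rw [if_pos hc2, if_pos (hcond.mp hc2)]
      · rw [if_neg hc2, if_neg (fun hq => hc2 (hcond.mpr hq))]

lemma E1_even_step {e x z : ℕ} (hx : x < 2^(e+1)) (hz : z < 2^(e+1))
    (hxp : x % 2 = 0) (hzp : z % 2 = 0) :
    E1 (e+1) x z = min 2 (E1 e (x/2) (z/2) +
      (if (x/2) &&& (z/2) ≠ 0 then 0 else if x/2 + z/2 = 2^e - 1 then 1 else 2)) := by
  have he1 : (1:ℕ) ≤ 2^e := Nat.one_le_two_pow
  have hp : (2:ℕ)^(e+1) = 2*2^e := by ring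
  have hx' : x/2 < 2^e := by omega
  have hz' : z/2 < 2^e := by omega
  unfold E1
  rw [eIdx_eq, eIdx_eq]
  simp only [Nat.add_sub_cancel]
  by_cases hbig : 2^(e+1) - 1 ≤ x + z
  · rw [if_pos hbig]
    have h0' : 2^e - 1 ≤ x/2 + z/2 := by omega
    rw [if_pos h0']
    have hnd : (x/2) &&& (z/2) ≠ 0 := by
      intro h
      have := disjoint_sum_lt hx' hz' h
      omega
    rw [if_pos hnd]
    rfl
  · rw [if_neg hbig]
    have hss : x + z ≤ 2^(e+1) - 2 := by omega
    have hss' : x/2 + z/2 ≤ 2^e - 1 := by omega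
    by_cases hnd : (x/2) &&& (z/2) ≠ 0
    · rw [if_pos hnd]
      have hne : x/2 + z/2 ≠ 2^e - 1 := fun h => hnd (land_eq_zero_of_add_eq h)
      rw [if_neg (show ¬ (2^e - 1 ≤ x/2 + z/2) by omega)]
      have hee : 1 ≤ e := by
        by_contra hc
        have : e = 0 := by omega
        subst this
        have : x/2 = 0 := by omega
        have hz0 : z/2 = 0 := by omega
        apply hnd
        rw [this, hz0]
        rfl
      have hW : ∃ k, 0 < k ∧ k ≤ e ∧ QP x z k := by
        have hor : (x/2 ||| z/2) < 2^e := lor_lt_two_pow hx' hz'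
        have hor2 : x/2 ||| z/2 ≠ 2^e - 1 := by
          intro h
          have hlal := land_add_lor (x/2) (z/2)
          have hand1 : 1 ≤ (x/2) &&& (z/2) := Nat.pos_of_ne_zero hnd
          have : x/2 + z/2 ≤ 2^e - 2 := by omega
          omega
        obtain ⟨j, hj, hjb⟩ := exists_zero_bit hor hor2
        refine ⟨j+1, by omega, by omega, ?_⟩
        rw [QP_shift, QP_iff]
        rw [Nat.testBit_or] at hjb
        exact ⟨(Bool.or_eq_false_iff.mp hjb).1, (Bool.or_eq_false_iff.mp hjb).2⟩
      have hG1pos : 0 < Nat.findGreatest (QP x z) e := by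
        obtain ⟨k, hk0, hke, hQ⟩ := hW
        have := Nat.le_findGreatest hke hQ
        omega
      rw [shift_findGreatest hG1pos]
      obtain ⟨F, hF⟩ : ∃ F, Nat.findGreatest (QP x z) e = F + 1 := ⟨Nat.findGreatest (QP x z) e - 1, by omega⟩
      rw [hF]
      simp only [Nat.add_sub_cancel]
      have hbnd := no_allones_boundary hee hx' hz' (by omega) hnd
      rw [shift_findGreatest hG1pos, hF, Nat.add_sub_cancel] at hbnd
      have hmx := mod_double x F
      have hmz := mod_double z F
      have h1F : (1:ℕ) ≤ 2^F := Nat.one_le_two_pow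
      have hpF : (2:ℕ)^(F+1) = 2*2^F := by ring
      have hcond : x % 2^(F+1) + z % 2^(F+1) < 2^(F+1) - 1 ↔
          (x/2) % 2^F + (z/2) % 2^F < 2^F - 1 := by omega
      by_cases hc2 : x % 2^(F+1) + z % 2^(F+1) < 2^(F+1) - 1
      · rw [if_pos hc2, if_pos (hcond.mp hc2)]
        omega
      · rw [if_neg hc2, if_neg (fun hq => hc2 (hcond.mpr hq))]
        omega
    · push_neg at hnd
      rw [if_neg (not_not_intro hnd)]
      by_cases hall : x/2 + z/2 = 2^e - 1
      · rw [if_pos hall, if_pos (show (2:ℕ)^e-1 ≤ x/2+z/2 by omega)]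
        have hor : x/2 ||| z/2 = 2^e - 1 := by
          rw [← add_eq_or_of_land_eq_zero hnd]
          exact hall
        have hG1 : Nat.findGreatest (QP x z) e = 0 := by
          rw [Nat.findGreatest_eq_zero_iff]
          intro k hk0 hke hQ
          obtain ⟨j, rfl⟩ : ∃ j, k = j + 1 := ⟨k-1, by omega⟩
          rw [QP_shift, QP_iff] at hQ
          have hbit : (x/2 ||| z/2).testBit j = false := by
            rw [Nat.testBit_or, hQ.1, hQ.2]; rfl
          rw [hor, Nat.testBit_two_pow_sub_one] at hbit
          simp only [decide_eq_false_iff_not] at hbit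
          omega
        rw [hG1]
        simp only [pow_zero]
        rw [if_neg (by omega)]
        omega
      · rw [if_neg hall, if_neg (show ¬ (2^e - 1 ≤ x/2 + z/2) by
          have := disjoint_sum_lt hx' hz' hnd
          omega)]
        have hor : x/2 ||| z/2 = x/2 + z/2 := (add_eq_or_of_land_eq_zero hnd).symm
        have hW : ∃ k, 0 < k ∧ k ≤ e ∧ QP x z k := by
          have horlt : (x/2 ||| z/2) < 2^e := lor_lt_two_pow hx' hz'
          have hor2 : x/2 ||| z/2 ≠ 2^e - 1 := by rw [hor]; exact hall
          obtain ⟨j, hj, hjb⟩ := exists_zero_bit horlt hor2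
          refine ⟨j+1, by omega, by omega, ?_⟩
          rw [QP_shift, QP_iff]
          rw [Nat.testBit_or] at hjb
          exact ⟨(Bool.or_eq_false_iff.mp hjb).1, (Bool.or_eq_false_iff.mp hjb).2⟩
        have hG1pos : 0 < Nat.findGreatest (QP x z) e := by
          obtain ⟨k, hk0, hke, hQ⟩ := hW
          have := Nat.le_findGreatest hke hQ
          omega
        obtain ⟨F, hF⟩ : ∃ F, Nat.findGreatest (QP x z) e = F + 1 := ⟨Nat.findGreatest (QP x z) e - 1, by omega⟩
        rw [hF]
        have h1F : (1:ℕ) ≤ 2^F := Nat.one_le_two_pow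
        have hpF : (2:ℕ)^(F+1) = 2*2^F := by ring
        have hFpos : (0:ℕ) < 2^F := by positivity
        have hmodlt : (x/2) % 2^F + (z/2) % 2^F ≤ 2^F - 1 :=
          disjoint_sum_lt (Nat.mod_lt _ hFpos) (Nat.mod_lt _ hFpos) (land_mod_eq_zero hnd F)
        have hmx := mod_double x F
        have hmz := mod_double z F
        rw [if_pos (by omega)]
        split <;> rfl
lemma culam_eq (y x z : ℕ) : culam y x z = min 2 (cnt y x z) := by
  unfold culam cnt
  congr 1
  have hset : {a : ℕ | a ≤ y ∧ IsUlam (wordTwo x a) ∧ IsUlam (wordTwo (y - a) z)} =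
      ↑((Finset.range (y+1)).filter (fun a => x &&& a = 0 ∧ (y - a) &&& z = 0)) := by
    ext a
    simp only [Set.mem_setOf_eq, Finset.coe_filter, Finset.mem_range, Nat.lt_succ_iff,
      isUlam_wordTwo]
  rw [hset, Set.ncard_coe_finset]

lemma m2gv : ∀ {e x z : ℕ}, x < 2^e → z < 2^e → min 2 (gv e x z) = E1 e x z := by
  intro e
  induction e with
  | zero =>
    intro x z hx hz
    have hx0 : x = 0 := by omega
    have hz0 : z = 0 := by omega
    subst hx0; subst hz0
    rw [gv_zero]
    unfold E1
    rw [if_pos (by omega)]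
    omega
  | succ e ih =>
    intro x z hx hz
    have he1 : (1:ℕ) ≤ 2^e := Nat.one_le_two_pow
    have hp : (2:ℕ)^(e+1) = 2*2^e := by ring
    have hx' : x/2 < 2^e := by omega
    have hz' : z/2 < 2^e := by omega
    rw [gv_succ]
    by_cases hpar : x % 2 = 0 ∧ z % 2 = 0
    · rw [if_pos hpar, one_mul]
      rw [show min 2 (gv e (x/2) (z/2) + hv e (x/2) (z/2)) =
        min 2 (min 2 (gv e (x/2) (z/2)) + min 2 (hv e (x/2) (z/2))) by omega]
      rw [ih hx' hz', m2hv hx' hz']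
      exact (E1_even_step hx hz hpar.1 hpar.2).symm
    · rw [if_neg hpar, zero_mul, add_zero]
      rw [ih hx' hz']
      exact (E1_odd_step hx hz (by omega)).symm

lemma c2v_le_two {d : ℕ} (hd : 1 ≤ d) (X Z : ℕ) : c2v d X Z ≤ 2 := by
  rw [c2v_eval d X Z hd]
  split <;> split <;> omega

lemma c2v_O2 {d : ℕ} (hd : 1 ≤ d) (X Z : ℕ) : c2v d X Z = O2 d X Z := by
  rw [c2v_eval d X Z hd]
  have h0 : loP X Z 0 ↔ Z % 2 = 0 := by
    unfold loP
    rw [Nat.and_zero]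
    constructor
    · rintro ⟨-, -, h⟩; rwa [← one_land (x := Z)]
    · intro h; exact ⟨by omega, rfl, by simpa [one_land] using h⟩
  have h1 : loP X Z 1 ↔ X % 2 = 0 := by
    unfold loP
    constructor
    · rintro ⟨-, h, -⟩; rwa [land_comm', one_land] at h
    · intro h
      refine ⟨le_refl 1, ?_, by simp [Nat.zero_and]⟩
      rwa [land_comm', one_land]
  rw [if_congr h0 rfl rfl, if_congr h1 rfl rfl]
  unfold O2
  have hXZ : (X + Z) % 2 = (X % 2 + Z % 2) % 2 := Nat.add_mod X Z 2
  rcases Nat.mod_two_eq_zero_or_one X with hX | hX <;>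
    rcases Nat.mod_two_eq_zero_or_one Z with hZ | hZ <;>
      simp [hX, hZ, hXZ]

lemma c1v_O1 {d X Z : ℕ} (hd : 1 ≤ d) (hX : X < 2^d) (hZ : Z < 2^d) :
    min 2 (c1v d X Z) = O1 d X Z := by
  rw [c1v_eq hd]
  have he1 : (1:ℕ) ≤ 2^(d-1) := Nat.one_le_two_pow
  have hd1 : d - 1 + 1 = d := by omega
  have hp : (2:ℕ)^d = 2*2^(d-1) := by
    conv_lhs => rw [← hd1]
    rw [pow_succ]
    ring
  have hX' : X/2 < 2^(d-1) := by omega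
  have hZ' : Z/2 < 2^(d-1) := by omega
  have hg := m2gv hX' hZ'
  have hX1 : X < 2^(d-1+1) := by rw [hd1]; exact hX
  have hZ1 : Z < 2^(d-1+1) := by rw [hd1]; exact hZ
  rcases Nat.mod_two_eq_zero_or_one X with hXp | hXp <;>
    rcases Nat.mod_two_eq_zero_or_one Z with hZp | hZp
  · -- both even
    rw [if_pos hXp, if_pos hZp]
    unfold O1
    by_cases hbig : 2^d - 2 ≤ X + Z
    · rw [if_pos hbig]
      have hE : E1 (d-1) (X/2) (Z/2) = 0 := by
        unfold E1
        rw [if_pos (by omega)]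
      have hgv : gv (d-1) (X/2) (Z/2) = 0 := by omega
      rw [hgv]
      omega
    · rw [if_neg hbig, if_pos (by omega : (X+Z) % 2 = 0), if_neg (by omega : ¬ X % 2 = 1)]
      have hE : 1 ≤ E1 (d-1) (X/2) (Z/2) := by
        unfold E1
        rw [if_neg (by omega)]
        split <;> omega
      omega
  · -- X even, Z odd
    rw [if_pos hXp, if_neg (by omega),
      show ((1:ℕ)+0) * gv (d-1) (X/2) (Z/2) = gv (d-1) (X/2) (Z/2) by ring, hg]
    have hstep : E1 (d-1+1) X Z = E1 (d-1) (X/2) (Z/2) := E1_odd_step hX1 hZ1 (Or.inr hZp)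
    rw [hd1] at hstep
    rw [← hstep]
    unfold E1 O1
    have hpar : ¬ (X+Z) % 2 = 0 := by omega
    by_cases hbig : 2^d - 2 ≤ X + Z
    · rw [if_pos (show 2^d - 1 ≤ X + Z by omega), if_pos hbig]
    · rw [if_neg (show ¬ 2^d - 1 ≤ X + Z by omega), if_neg hbig, if_neg hpar]
  · -- X odd, Z even
    rw [if_neg (by omega), if_pos hZp,
      show ((0:ℕ)+1) * gv (d-1) (X/2) (Z/2) = gv (d-1) (X/2) (Z/2) by ring, hg]
    have hstep : E1 (d-1+1) X Z = E1 (d-1) (X/2) (Z/2) := E1_odd_step hX1 hZ1 (Or.inl hXp)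
    rw [hd1] at hstep
    rw [← hstep]
    unfold E1 O1
    have hpar : ¬ (X+Z) % 2 = 0 := by omega
    by_cases hbig : 2^d - 2 ≤ X + Z
    · rw [if_pos (show 2^d - 1 ≤ X + Z by omega), if_pos hbig]
    · rw [if_neg (show ¬ 2^d - 1 ≤ X + Z by omega), if_neg hbig, if_neg hpar]
  · -- both odd
    rw [if_neg (by omega), if_neg (by omega),
      show ((0:ℕ)+0) * gv (d-1) (X/2) (Z/2) = 0 by ring]
    unfold O1
    by_cases hbig : 2^d - 2 ≤ X + Z
    · rw [if_pos hbig]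
      omega
    · rw [if_neg hbig, if_pos (by omega : (X+Z) % 2 = 0), if_pos hXp]
      omega

lemma min2_mul (a b : ℕ) : min 2 (a * b) = min 2 (min 2 a * min 2 b) := by
  rcases Nat.lt_or_ge a 2 with ha | ha <;> rcases Nat.lt_or_ge b 2 with hb | hb
  · interval_cases a <;> interval_cases b <;> simp
  · interval_cases a
    · simp
    · rw [show min 2 b = 2 by omega, show min 2 1 = 1 from rfl, one_mul, one_mul]
      omega
  · interval_cases b
    · simp
    · rw [show min 2 a = 2 by omega, show min 2 1 = 1 from rfl, mul_one, mul_one]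
      omega
  · have h4 : 2*2 ≤ a * b := Nat.mul_le_mul ha hb
    rw [show min 2 a = 2 by omega, show min 2 b = 2 by omega]
    omega

lemma min2_bilinear (A B C D : ℕ) :
    min 2 (A*B + C*D) = min 2 (min 2 D * min 2 C + min 2 B * min 2 A) := by
  calc min 2 (A*B + C*D) = min 2 (min 2 (A*B) + min 2 (C*D)) := by omega
  _ = min 2 (min 2 (min 2 A * min 2 B) + min 2 (min 2 C * min 2 D)) := by
      rw [← min2_mul, ← min2_mul]
  _ = min 2 (min 2 A * min 2 B + min 2 C * min 2 D) := by omega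
  _ = min 2 (min 2 D * min 2 C + min 2 B * min 2 A) := by ring_nf
end UlamThm

/-- tensor decomposition of `culam[2^d y + 1]` for odd `y`. -/
theorem culam_two_pow_mul_add_one (y : ℕ) (hy : 0 < y) (hodd : Odd y) (d : ℕ)
    (hd : 1 ≤ d) (x z : ℕ) :
    culam (2 ^ d * y + 1) x z =
      min 2 (culam (y - 1) (x / 2 ^ d) (z / 2 ^ d) * O1 d (x % 2 ^ d) (z % 2 ^ d) +
             culam y (x / 2 ^ d) (z / 2 ^ d) * O2 d (x % 2 ^ d) (z % 2 ^ d)) := by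
  have hXlt : x % 2^d < 2^d := Nat.mod_lt _ (by positivity)
  have hZlt : z % 2^d < 2^d := Nat.mod_lt _ (by positivity)
  rw [UlamThm.culam_eq, UlamThm.culam_eq, UlamThm.culam_eq]
  rw [UlamThm.cnt_split hd hy]
  rw [← UlamThm.c2v_O2 hd (x % 2^d) (z % 2^d)]
  rw [← UlamThm.c1v_O1 hd hXlt hZlt]
  rw [UlamThm.min2_bilinear]
  have hc2 : min 2 (UlamThm.c2v d (x % 2^d) (z % 2^d)) = UlamThm.c2v d (x % 2^d) (z % 2^d) := by
    have := UlamThm.c2v_le_two hd (x % 2^d) (z % 2^d)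
    omega
  rw [hc2]
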